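/- Let f, g : ℕ → ℕ with 1 ≤ g(k) < f(k) for all k, and suppose there exists a real ε > 0 such that g(k)^{1+ε} ≤ f(k) for all k. Then for every natural number n ≥ 1, 𝔠(f^n, g) = 𝔠(f,g), where f^n(k) = f(k)^n. -/

import Mathlib

def encStep (B : Finset ℕ) (F z : ℕ) : ℕ :=
  ((Finset.range z).filter (fun w => w % F ∈ B)).card

def encIter (Bs : ℕ → Finset ℕ) (F : ℕ) : ℕ → ℕ → ℕ
  | 0, z => z
  | j+1, z => encStep (Bs j) F (encIter Bs F j z)

def Tst (G F h : ℕ) : ℕ := G * (h / F) + min (h % F) G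

lemma encStep_lt_of_lt {B : Finset ℕ} {F z z' : ℕ} (hz : z < z') (hd : z % F ∈ B) :
    encStep B F z < encStep B F z' := by
  apply Finset.card_lt_card
  constructor
  · exact Finset.filter_subset_filter _ (Finset.range_subset_range.2 hz.le)
  · intro hsub
    have : z ∈ (Finset.range z').filter (fun w => w % F ∈ B) := by
      simp [Finset.mem_filter, hz, hd]
    have := hsub this
    simp [Finset.mem_filter] at this

lemma card_filter_mod_le (B : Finset ℕ) (F h : ℕ) (hF : 0 < F) :
    ((Finset.range h).filter (fun w => w % F ∈ B)).card
      ≤ B.card * (h / F) + min (h % F) B.card := by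
  classical
  set q := h / F with hq
  set s := h % F with hs
  have hqs : F * q + s = h := Nat.div_add_mod h F
  have hcomm : F * q = q * F := Nat.mul_comm _ _
  have hsF : s < F := Nat.mod_lt _ hF
  have hrange : Finset.range h = Finset.range (F*q) ∪ Finset.Ico (F*q) h := by
    rw [Finset.range_eq_Ico, Finset.range_eq_Ico]
    exact (Finset.Ico_union_Ico_eq_Ico (a := 0) (b := F*q) (c := h) (Nat.zero_le _) (by omega)).symm
  rw [hrange, Finset.filter_union]
  refine (Finset.card_union_le _ _).trans ?_
  have h1 : ((Finset.range (F*q)).filter (fun w => w % F ∈ B)).card ≤ q * B.card := by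
    have := Finset.card_le_card_of_injOn (f := fun w => ((w / F : ℕ), (w % F : ℕ)))
      (s := (Finset.range (F*q)).filter (fun w => w % F ∈ B))
      (t := (Finset.range q) ×ˢ B)
      (by
        intro w hw
        simp only [Finset.mem_coe, Finset.mem_filter, Finset.mem_range] at hw
        simp only [Finset.mem_coe, Finset.mem_product, Finset.mem_range]
        refine ⟨(Nat.div_lt_iff_lt_mul hF).2 ?_, hw.2⟩
        omega)
      (by
        intro a _ b _ hab
        simp only [Prod.mk.injEq] at hab
        rw [← Nat.div_add_mod a F, ← Nat.div_add_mod b F, hab.1, hab.2])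
    simpa [Finset.card_product] using this
  have h2 : ((Finset.Ico (F*q) h).filter (fun w => w % F ∈ B)).card ≤ min s B.card := by
    have key : ∀ w, F*q ≤ w → w < h → w % F = w - F*q := by
      intro w hw1 hw2
      have hdiv : w / F = q := by
        apply Nat.div_eq_of_lt_le
        · omega
        · have : (q+1) * F = q * F + F := by ring
          omega
      have := Nat.div_add_mod w F
      rw [hdiv] at this
      omega
    refine le_min ?_ ?_
    · refine (Finset.card_filter_le _ _).trans ?_
      rw [Nat.card_Ico]; omega
    · refine Finset.card_le_card_of_injOn (fun w => w % F) ?_ ?_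
      · intro w hw
        simp only [Finset.mem_coe, Finset.mem_filter] at hw
        exact hw.2
      · intro a ha b hb hab
        simp only [Finset.coe_filter, Set.mem_setOf_eq, Finset.mem_Ico] at ha hb
        have ha' := key a ha.1.1 ha.1.2
        have hb' := key b hb.1.1 hb.1.2
        simp only at hab
        omega
  have hc2 : q * B.card = B.card * q := Nat.mul_comm _ _
  omega

lemma encStep_lt_T {B : Finset ℕ} {F h z : ℕ} (hF : 0 < F) (hz : z < h) (hd : z % F ∈ B) :
    encStep B F z < Tst B.card F h := by
  have h1 : encStep B F z < ((Finset.range h).filter (fun w => w % F ∈ B)).card := by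
    apply Finset.card_lt_card
    constructor
    · exact Finset.filter_subset_filter _ (Finset.range_subset_range.2 hz.le)
    · intro hsub
      have : z ∈ (Finset.range h).filter (fun w => w % F ∈ B) := by
        simp [Finset.mem_filter, hz, hd]
      have := hsub this
      simp [Finset.mem_filter] at this
  exact h1.trans_le (card_filter_mod_le B F h hF)


/-- `B` is a `g`-slalom: a sequence of finite sets of naturals with `|B k| = g k`. -/
def IsSlalom (g : ℕ → ℕ) (B : ℕ → Finset ℕ) : Prop := ∀ k, (B k).card = g k

/-- `x` is covered by the slalom `B`. -/
def Covers (B : ℕ → Finset ℕ) (x : ℕ → ℕ) : Prop := ∀ k, x k ∈ B k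

/-- `slalomCov f g` is the least cardinality of a family of `g`-slaloms covering
every `x : ℕ → ℕ` with `x k < f k` for all `k`. -/
noncomputable def slalomCov (f g : ℕ → ℕ) : Cardinal :=
  sInf { c : Cardinal | ∃ 𝓑 : Set (ℕ → Finset ℕ),
    (∀ B ∈ 𝓑, IsSlalom g B) ∧
    (∀ x : ℕ → ℕ, (∀ k, x k < f k) → ∃ B ∈ 𝓑, Covers B x) ∧
    c = Cardinal.mk 𝓑 }

lemma encIter_congr {Bs Bs' : ℕ → Finset ℕ} {F : ℕ} :
    ∀ {j : ℕ}, (∀ i < j, Bs i = Bs' i) → ∀ z, encIter Bs F j z = encIter Bs' F j z := by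
  intro j
  induction j with
  | zero => intro _ z; rfl
  | succ j ih =>
    intro h z
    show encStep (Bs j) F _ = encStep (Bs' j) F _
    rw [h j (Nat.lt_succ_self j), ih (fun i hi => h i (hi.trans (Nat.lt_succ_self j)))]

lemma encIter_lt {Bs : ℕ → Finset ℕ} {F G : ℕ} (hF : 0 < F) :
    ∀ {j z h0 : ℕ}, (∀ i < j, (Bs i).card = G) →
      (∀ i < j, encIter Bs F i z % F ∈ Bs i) → z < h0 →
      encIter Bs F j z < (Tst G F)^[j] h0 := by
  intro j
  induction j with
  | zero => intro z h0 _ _ hz; exact hz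
  | succ j ih =>
    intro z h0 hcard hgood hz
    rw [Function.iterate_succ_apply']
    have h1 : encIter Bs F j z < (Tst G F)^[j] h0 :=
      ih (fun i hi => hcard i (hi.trans (Nat.lt_succ_self j)))
        (fun i hi => hgood i (hi.trans (Nat.lt_succ_self j))) hz
    have := encStep_lt_T (B := Bs j) hF h1 (hgood j (Nat.lt_succ_self j))
    rwa [hcard j (Nat.lt_succ_self j)] at this

lemma encIter_lt_of_lt {Bs : ℕ → Finset ℕ} {F : ℕ} :
    ∀ {j z z' : ℕ}, z < z' → (∀ i < j, encIter Bs F i z % F ∈ Bs i) →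
      encIter Bs F j z < encIter Bs F j z' := by
  intro j
  induction j with
  | zero => intro z z' hz _; exact hz
  | succ j ih =>
    intro z z' hz hgood
    exact encStep_lt_of_lt
      (ih hz (fun i hi => hgood i (hi.trans (Nat.lt_succ_self j))))
      (hgood j (Nat.lt_succ_self j))

lemma Tst_stay {G F h : ℕ} (hF : 0 < F) (hGF : G ≤ F) (hh : h ≤ F) : Tst G F h ≤ F := by
  rcases eq_or_lt_of_le hh with rfl | hlt
  · simp [Tst, Nat.div_self hF, Nat.mod_self]; omega
  · have h0 : h / F = 0 := Nat.div_eq_of_lt hlt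
    have h1 : h % F = h := Nat.mod_eq_of_lt hlt
    simp only [Tst, h0, h1, Nat.mul_zero, Nat.zero_add]
    omega

lemma Tst_dec {G F h : ℕ} (hF : 0 < F) (hGF : G < F) (hh : F < h) : Tst G F h < h := by
  have hq : 1 ≤ h / F := (Nat.one_le_div_iff hF).2 hh.le
  have hmul : G * (h / F) < F * (h / F) :=
    Nat.mul_lt_mul_of_lt_of_le hGF (le_refl _) (by omega)
  have hdm := Nat.div_add_mod h F
  have hmin : min (h % F) G ≤ h % F := min_le_left _ _
  unfold Tst
  omega

lemma Tst_reach {G F : ℕ} (hF : 0 < F) (hGF : G < F) :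
    ∀ K h, h ≤ F + K → (Tst G F)^[K] h ≤ F := by
  intro K
  induction K with
  | zero => intro h hh; simpa using hh
  | succ K ih =>
    intro h hh
    rw [Function.iterate_succ_apply]
    rcases le_or_gt h F with h1 | h1
    · exact ih _ ((Tst_stay hF hGF.le h1).trans (by omega))
    · exact ih _ (by have := Tst_dec hF hGF h1; omega)

lemma Tst_le_real {G F h : ℕ} (hF : 0 < F) : (Tst G F h : ℝ) ≤ ((G:ℝ)/F) * h + G := by
  have h1 : ((h / F : ℕ) : ℝ) ≤ (h : ℝ) / F := Nat.cast_div_le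
  have h2 : ((min (h % F) G : ℕ) : ℝ) ≤ (G : ℝ) := by
    exact_mod_cast (min_le_right (h % F) G)
  have heq : (Tst G F h : ℝ) = (G:ℝ) * ((h / F : ℕ) : ℝ) + ((min (h % F) G : ℕ) : ℝ) := by
    simp [Tst]
  rw [heq]
  have h3 : (G:ℝ) * ((h / F : ℕ) : ℝ) ≤ (G:ℝ) * ((h:ℝ)/F) :=
    mul_le_mul_of_nonneg_left h1 (Nat.cast_nonneg _)
  have h4 : (G:ℝ) * ((h:ℝ)/F) = ((G:ℝ)/F) * h := by ring
  linarith

lemma Tst_iter_real {G F : ℕ} (hG : 1 ≤ G) (hGF : G < F) (j h0 : ℕ) :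
    (((Tst G F)^[j] h0 : ℕ) : ℝ) ≤ ((G:ℝ)/F)^j * h0 + (G:ℝ)*F/((F:ℝ)-G) := by
  have hF : 0 < F := by omega
  have hGr : (0:ℝ) < G := by exact_mod_cast hG
  have hFr : (0:ℝ) < F := by exact_mod_cast hF
  have hGFr : (G:ℝ) < F := by exact_mod_cast hGF
  have hFG : (0:ℝ) < (F:ℝ) - G := by linarith
  induction j with
  | zero =>
    simp only [Function.iterate_zero, id_eq, pow_zero, one_mul]
    have : (0:ℝ) ≤ (G:ℝ)*F/((F:ℝ)-G) := by positivity
    linarith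
  | succ j ih =>
    rw [Function.iterate_succ_apply']
    refine (Tst_le_real hF).trans ?_
    have h5 : ((G:ℝ)/F) * (((Tst G F)^[j] h0 : ℕ) : ℝ)
        ≤ ((G:ℝ)/F) * (((G:ℝ)/F)^j * h0 + (G:ℝ)*F/((F:ℝ)-G)) :=
      mul_le_mul_of_nonneg_left ih (by positivity)
    have h6 : ((G:ℝ)/F) * (((G:ℝ)/F)^j * h0 + (G:ℝ)*F/((F:ℝ)-G)) + G
        = ((G:ℝ)/F)^(j+1) * h0 + (((G:ℝ)*F/((F:ℝ)-G)) * ((G:ℝ)/F) + G) := by ring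
    have h7 : ((G:ℝ)*F/((F:ℝ)-G)) * ((G:ℝ)/F) + G = (G:ℝ)*F/((F:ℝ)-G) := by
      field_simp
      ring
    linarith

lemma uniformM (n : ℕ) (ε : ℝ) (hε : 0 < ε) :
    ∃ M : ℕ, ∀ F G : ℕ, 1 ≤ G → G < F → (G:ℝ) ^ ((1:ℝ)+ε) ≤ (F:ℝ) →
      (Tst G F)^[M] (F^n) ≤ F := by
  classical
  set G₀ : ℕ := ⌈(2:ℝ) ^ ((1:ℝ)/ε)⌉₊ with hG₀
  set M₁ : ℕ := ⌈(n:ℝ) * (1+ε)/ε⌉₊ with hM₁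
  set K : ℕ := 2 * G₀^2 with hK
  refine ⟨K + 1 + M₁, ?_⟩
  intro F G hG hGF hpow
  have hF : 0 < F := by omega
  have hF2 : 2 ≤ F := by omega
  have hGr : (0:ℝ) < G := by exact_mod_cast hG
  have hFr : (0:ℝ) < F := by positivity
  have hF1 : (1:ℝ) < F := by exact_mod_cast hF2
  have hGFr : (G:ℝ) < F := by exact_mod_cast hGF
  have hFG : (0:ℝ) < (F:ℝ) - G := by linarith
  have h1p : (0:ℝ) < 1 + ε := by linarith
  -- G ≤ F^(1/(1+ε))
  have hGle : (G:ℝ) ≤ (F:ℝ) ^ ((1:ℝ)/(1+ε)) := by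
    have h0 := Real.rpow_le_rpow (by positivity) hpow (by positivity : (0:ℝ) ≤ 1/(1+ε))
    rw [← Real.rpow_mul hGr.le] at h0
    have : (1+ε) * (1/(1+ε)) = 1 := by field_simp
    rwa [this, Real.rpow_one] at h0
  -- phase 1 key estimate
  have hkey : ((G:ℝ)/F)^M₁ * ((F:ℝ)^n) ≤ F := by
    have e1 : (G:ℝ)^M₁ ≤ (F:ℝ) ^ ((M₁:ℝ)/(1+ε)) := by
      calc (G:ℝ)^M₁ = (G:ℝ) ^ ((M₁:ℕ):ℝ) := (Real.rpow_natCast _ _).symm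
        _ ≤ ((F:ℝ) ^ ((1:ℝ)/(1+ε))) ^ ((M₁:ℕ):ℝ) :=
            Real.rpow_le_rpow hGr.le hGle (Nat.cast_nonneg _)
        _ = (F:ℝ) ^ (((1:ℝ)/(1+ε)) * (M₁:ℝ)) := by
            rw [← Real.rpow_mul hFr.le]
        _ = (F:ℝ) ^ ((M₁:ℝ)/(1+ε)) := by ring_nf
    have e2 : (F:ℝ) ^ ((M₁:ℝ)/(1+ε)) * (F:ℝ)^n ≤ (F:ℝ)^(M₁+1) := by
      have hn' : (F:ℝ)^n = (F:ℝ) ^ ((n:ℕ):ℝ) := (Real.rpow_natCast _ _).symm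
      have hM : (F:ℝ)^(M₁+1) = (F:ℝ) ^ (((M₁+1:ℕ)):ℝ) := (Real.rpow_natCast _ _).symm
      rw [hn', hM, ← Real.rpow_add hFr]
      apply Real.rpow_le_rpow_of_exponent_le hF1.le
      have hM₁' : (n:ℝ) * (1+ε)/ε ≤ (M₁:ℝ) := Nat.le_ceil _
      have hM₁'' : (n:ℝ) * (1+ε) ≤ (M₁:ℝ) * ε := by
        rw [div_le_iff₀ hε] at hM₁'
        linarith
      push_cast
      rw [div_add' _ _ _ (ne_of_gt h1p), div_le_iff₀ h1p]
      nlinarith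
    have hFn : (0:ℝ) < (F:ℝ)^M₁ := by positivity
    rw [div_pow, div_mul_eq_mul_div, div_le_iff₀ hFn]
    calc (G:ℝ)^M₁ * (F:ℝ)^n ≤ (F:ℝ) ^ ((M₁:ℝ)/(1+ε)) * (F:ℝ)^n :=
          mul_le_mul_of_nonneg_right e1 (by positivity)
      _ ≤ (F:ℝ)^(M₁+1) := e2
      _ = (F:ℝ) * (F:ℝ)^M₁ := by ring
  set h1 : ℕ := (Tst G F)^[M₁] (F^n) with hh1def
  have hphase1 : (h1 : ℝ) ≤ (F:ℝ) + (G:ℝ)*F/((F:ℝ)-G) := by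
    have := Tst_iter_real hG hGF M₁ (F^n)
    have hcast : ((F^n : ℕ) : ℝ) = (F:ℝ)^n := by push_cast; ring
    rw [hcast] at this
    linarith [hkey, this]
  have hsplit : (Tst G F)^[K + 1 + M₁] (F^n)
      = (Tst G F)^[K + 1] h1 := by
    rw [Function.iterate_add_apply]
  rw [hsplit]
  rcases le_or_gt (2*G) F with hA | hB
  · -- case A : 2G ≤ F
    have hAr : 2*(G:ℝ) ≤ F := by exact_mod_cast hA
    have hb2 : (G:ℝ)*F/((F:ℝ)-G) ≤ 2*G := by
      rw [div_le_iff₀ hFG]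
      nlinarith
    have hh1 : h1 ≤ 2*F := by
      have : (h1 : ℝ) ≤ ((2*F : ℕ) : ℝ) := by push_cast; linarith
      exact_mod_cast this
    have hstep : Tst G F h1 ≤ F := by
      rcases le_or_gt h1 F with hc | hc
      · exact Tst_stay hF hGF.le hc
      · rcases lt_or_eq_of_le hh1 with hc2 | hc2
        · have hdiv : h1 / F = 1 := by
            apply Nat.div_eq_of_lt_le <;> omega
          have hmin : min (h1 % F) G ≤ G := min_le_right _ _
          unfold Tst
          rw [hdiv]
          omega
        · have hdiv : h1 / F = 2 := by
            rw [hc2]; exact Nat.mul_div_cancel 2 hF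
          have hmod : h1 % F = 0 := by
            rw [hc2]; exact Nat.mul_mod_left 2 F
          unfold Tst
          rw [hdiv, hmod]
          simp
          omega
    rw [Function.iterate_add_apply, Function.iterate_one]
    exact Tst_reach hF hGF K _ (hstep.trans (by omega))
  · -- case B : F < 2G
    have hG2 : 2 ≤ G := by omega
    have hGG0 : G ≤ G₀ := by
      have hBr : (F:ℝ) < 2*G := by exact_mod_cast hB
      have hsplit2 : (G:ℝ)^((1:ℝ)+ε) = G * (G:ℝ)^ε := by
        rw [Real.rpow_add hGr, Real.rpow_one]
      have hε2 : (G:ℝ)^ε < 2 := by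
        have h' : (G:ℝ) * (G:ℝ)^ε < (G:ℝ) * 2 := by
          rw [← hsplit2]
          nlinarith
        exact lt_of_mul_lt_mul_left h' hGr.le
      have hGlt : (G:ℝ) < (2:ℝ)^((1:ℝ)/ε) := by
        have h'' := Real.rpow_lt_rpow (by positivity) hε2 (by positivity : (0:ℝ) < 1/ε)
        rw [← Real.rpow_mul hGr.le] at h''
        have : ε * (1/ε) = 1 := by field_simp
        rwa [this, Real.rpow_one] at h''
      have : (G:ℝ) < (G₀:ℕ) := lt_of_lt_of_le hGlt (Nat.le_ceil _)
      have : G < G₀ := by exact_mod_cast this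
      omega
    have hbound : (G:ℝ)*F/((F:ℝ)-G) ≤ 2*((G₀:ℕ):ℝ)^2 := by
      have h1' : (1:ℝ) ≤ (F:ℝ) - G := by
        have : (G:ℝ) + 1 ≤ F := by exact_mod_cast hGF
        linarith
      have hd : (G:ℝ)*F/((F:ℝ)-G) ≤ (G:ℝ)*F := div_le_self (by positivity) h1'
      have hBr : (F:ℝ) < 2*G := by exact_mod_cast hB
      have hG0r : (G:ℝ) ≤ (G₀:ℕ) := by exact_mod_cast hGG0
      nlinarith
    have hh1 : h1 ≤ F + K := by
      have hKr : ((K:ℕ):ℝ) = 2*((G₀:ℕ):ℝ)^2 := by rw [hK]; push_cast; ring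
      have : (h1 : ℝ) ≤ ((F + K : ℕ) : ℝ) := by
        push_cast
        rw [show ((K:ℕ):ℝ) = 2*((G₀:ℕ):ℝ)^2 from hKr] at *
        linarith
      exact_mod_cast this
    rw [show K + 1 = 1 + K from by omega, Function.iterate_add_apply,
      Function.iterate_one]
    exact Tst_stay hF hGF.le (Tst_reach hF hGF K h1 hh1)

open Classical in
noncomputable def padF (s : Finset ℕ) (m : ℕ) : Finset ℕ :=
  if h : ∃ t : Finset ℕ, s ⊆ t ∧ t.card = m then h.choose else s

lemma padF_spec {s : Finset ℕ} {m : ℕ} (hm : s.card ≤ m) :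
    s ⊆ padF s m ∧ (padF s m).card = m := by
  rw [padF]
  split_ifs with h'
  · exact h'.choose_spec
  · exact absurd (Infinite.exists_superset_card_eq s m hm) h'

noncomputable def greedyAux (f : ℕ → ℕ) (pick : (ℕ → ℕ) → (ℕ → Finset ℕ)) (x : ℕ → ℕ) :
    ℕ → ℕ → ℕ → Finset ℕ
  | 0 => fun _ _ => ∅
  | j+1 => fun i => if i = j then
      pick (fun k => encIter (fun i' => greedyAux f pick x j i' k) (f k) j (x k) % f k)
    else greedyAux f pick x j i

noncomputable def Bfin (f : ℕ → ℕ) (pick : (ℕ → ℕ) → (ℕ → Finset ℕ)) (x : ℕ → ℕ)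
    (i : ℕ) : ℕ → Finset ℕ := greedyAux f pick x (i+1) i

lemma greedy_stable (f : ℕ → ℕ) (pick : (ℕ → ℕ) → (ℕ → Finset ℕ)) (x : ℕ → ℕ) :
    ∀ j' j, j ≤ j' → ∀ i, i < j → greedyAux f pick x j' i = greedyAux f pick x j i := by
  intro j'
  induction j' with
  | zero => intro j hj i hi; omega
  | succ j' ih =>
    intro j hj i hi
    rcases Nat.eq_or_lt_of_le hj with rfl | hj'
    · rfl
    · have hj'' : j ≤ j' := by omega
      have hne : i ≠ j' := by omega
      show (if i = j' then _ else greedyAux f pick x j' i) = _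
      rw [if_neg hne]
      exact ih j hj'' i hi

lemma Bfin_eq (f : ℕ → ℕ) (pick : (ℕ → ℕ) → (ℕ → Finset ℕ)) (x : ℕ → ℕ)
    {j i : ℕ} (hi : i < j) : greedyAux f pick x j i = Bfin f pick x i :=
  greedy_stable f pick x j (i+1) hi i (Nat.lt_succ_self i)

lemma Bfin_unfold (f : ℕ → ℕ) (pick : (ℕ → ℕ) → (ℕ → Finset ℕ)) (x : ℕ → ℕ) (j : ℕ) :
    Bfin f pick x j
      = pick (fun k => encIter (fun i => Bfin f pick x i k) (f k) j (x k) % f k) := by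
  show (if j = j then _ else greedyAux f pick x j j) = _
  rw [if_pos rfl]
  have : (fun k => encIter (fun i' => greedyAux f pick x j i' k) (f k) j (x k) % f k)
      = (fun k => encIter (fun i => Bfin f pick x i k) (f k) j (x k) % f k) :=
    funext fun k => congrArg (· % f k)
      (encIter_congr (fun i hi => congrFun (Bfin_eq f pick x hi) k) (x k))
  rw [this]

lemma aleph0_le_family {f g : ℕ → ℕ} {𝓑 : Set (ℕ → Finset ℕ)}
    (hgf : ∀ k, g k < f k)
    (hsl : ∀ B ∈ 𝓑, IsSlalom g B)
    (hcov : ∀ x : ℕ → ℕ, (∀ k, x k < f k) → ∃ B ∈ 𝓑, Covers B x) :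
    Cardinal.aleph0 ≤ Cardinal.mk 𝓑 := by
  by_contra hlt
  push_neg at hlt
  have hfin : 𝓑.Finite := Cardinal.lt_aleph0_iff_set_finite.1 hlt
  have hne : 𝓑.Nonempty := by
    obtain ⟨B, hB, _⟩ := hcov (fun _ => 0)
      (fun k => lt_of_le_of_lt (Nat.zero_le (g k)) (hgf k))
    exact ⟨B, hB⟩
  obtain ⟨e, he⟩ := Set.Countable.exists_eq_range hfin.countable hne
  have hex : ∀ k, ∃ m, m < f k ∧ m ∉ (e k) k := by
    intro k
    have hcard : ((e k) k).card = g k := by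
      have : e k ∈ 𝓑 := by rw [he]; exact ⟨k, rfl⟩
      exact hsl _ this k
    by_contra hcon
    push_neg at hcon
    have hsub : Finset.range (f k) ⊆ (e k) k := fun m hm =>
      hcon m (Finset.mem_range.1 hm)
    have := Finset.card_le_card hsub
    rw [Finset.card_range, hcard] at this
    have := hgf k
    omega
  choose xd hxd1 hxd2 using hex
  obtain ⟨B, hB, hBcov⟩ := hcov xd hxd1
  rw [he] at hB
  obtain ⟨i, rfl⟩ := hB
  exact hxd2 i (hBcov i)

lemma covSet_nonempty (f g : ℕ → ℕ) (hg : ∀ k, 1 ≤ g k) :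
    Set.Nonempty { c : Cardinal | ∃ 𝓑 : Set (ℕ → Finset ℕ),
      (∀ B ∈ 𝓑, IsSlalom g B) ∧
      (∀ x : ℕ → ℕ, (∀ k, x k < f k) → ∃ B ∈ 𝓑, Covers B x) ∧
      c = Cardinal.mk 𝓑 } := by
  refine ⟨Cardinal.mk {B : ℕ → Finset ℕ | IsSlalom g B},
    {B | IsSlalom g B}, fun B hB => hB, ?_, rfl⟩
  intro x hx
  refine ⟨fun k => (Finset.range (g k)).image (fun i => x k + i), ?_, ?_⟩
  · intro k
    rw [Finset.card_image_of_injective _ (add_right_injective (x k)), Finset.card_range]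
  · intro k
    simp only [Finset.mem_image, Finset.mem_range]
    exact ⟨0, hg k, by ring⟩

open Classical in
noncomputable def slalomD0 (f : ℕ → ℕ) (n M : ℕ) (Bv : Fin (M+1) → ℕ → Finset ℕ)
    (k : ℕ) : Finset ℕ :=
  (Finset.range (f k ^ n)).filter (fun z =>
    (∀ i < M, encIter (fun i' => if h : i' < M+1 then Bv ⟨i', h⟩ k else ∅) (f k) i z % f k
        ∈ (if h : i < M+1 then Bv ⟨i, h⟩ k else ∅)) ∧
    encIter (fun i' => if h : i' < M+1 then Bv ⟨i', h⟩ k else ∅) (f k) M z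
        ∈ Bv ⟨M, Nat.lt_succ_self M⟩ k)

lemma slalomD0_card_le (f : ℕ → ℕ) (n M : ℕ) (Bv : Fin (M+1) → ℕ → Finset ℕ) (k : ℕ) :
    (slalomD0 f n M Bv k).card ≤ (Bv ⟨M, Nat.lt_succ_self M⟩ k).card := by
  classical
  apply Finset.card_le_card_of_injOn
    (fun z => encIter (fun i' => if h : i' < M+1 then Bv ⟨i', h⟩ k else ∅) (f k) M z)
  · intro z hz
    simp only [slalomD0, Finset.mem_coe, Finset.mem_filter] at hz
    exact hz.2.2
  · intro a ha b hb hab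
    simp only [slalomD0, Finset.coe_filter, Set.mem_setOf_eq, Finset.mem_range] at ha hb
    by_contra hne
    rcases Nat.lt_or_ge a b with h | h
    · exact absurd hab (ne_of_lt (encIter_lt_of_lt h (fun i hi => ha.2.1 i hi)))
    · have h' : b < a := by omega
      exact absurd hab.symm (ne_of_lt (encIter_lt_of_lt h' (fun i hi => hb.2.1 i hi)))


theorem slalomCov_pow_eq (f g : ℕ → ℕ) (hg : ∀ k, 1 ≤ g k) (hgf : ∀ k, g k < f k)
    (ε : ℝ) (hε : 0 < ε) (hpow : ∀ k, (g k : ℝ) ^ ((1 : ℝ) + ε) ≤ (f k : ℝ)) :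
    ∀ n : ℕ, 1 ≤ n → slalomCov (fun k => f k ^ n) g = slalomCov f g := by
  intro n hn
  classical
  have hf0 : ∀ k, 0 < f k := fun k => lt_of_le_of_lt (Nat.zero_le _) (hgf k)
  have hle1 : slalomCov f g ≤ slalomCov (fun k => f k ^ n) g := by
    obtain ⟨𝓑n, hsl, hcov, hceq⟩ := csInf_mem (covSet_nonempty (fun k => f k ^ n) g hg)
    have hmem : slalomCov (fun k => f k ^ n) g ∈ { c : Cardinal |
        ∃ 𝓑 : Set (ℕ → Finset ℕ),
        (∀ B ∈ 𝓑, IsSlalom g B) ∧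
        (∀ x : ℕ → ℕ, (∀ k, x k < f k) → ∃ B ∈ 𝓑, Covers B x) ∧
        c = Cardinal.mk 𝓑 } := by
      refine ⟨𝓑n, hsl, ?_, hceq⟩
      intro x hx
      exact hcov x (fun k => lt_of_lt_of_le (hx k) (Nat.le_self_pow (by omega) _))
    exact csInf_le' hmem
  refine le_antisymm ?_ hle1
  obtain ⟨𝓑, hsl, hcov, hceq⟩ := csInf_mem (covSet_nonempty f g hg)
  obtain ⟨M, hM⟩ := uniformM n ε hε
  have hκinf : Cardinal.aleph0 ≤ Cardinal.mk 𝓑 := aleph0_le_family hgf hsl hcov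
  obtain ⟨pick, hpick⟩ : ∃ pick : (ℕ → ℕ) → (ℕ → Finset ℕ),
      ∀ y, (∀ k, y k < f k) → pick y ∈ 𝓑 ∧ Covers (pick y) y := by
    choose pickB h1 h2 using hcov
    exact ⟨fun y => if h : ∀ k, y k < f k then pickB y h else fun _ => ∅,
      fun y hy => by dsimp only; rw [dif_pos hy]; exact ⟨h1 y hy, h2 y hy⟩⟩
  set Φ : (Fin (M+1) → ℕ → Finset ℕ) → (ℕ → Finset ℕ) :=
    fun Bv k => padF (slalomD0 f n M Bv k) (g k) with hΦ
  set T : Set (Fin (M+1) → ℕ → Finset ℕ) := {Bv | ∀ i, Bv i ∈ 𝓑} with hT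
  have hcard0 : ∀ Bv ∈ T, ∀ k, (slalomD0 f n M Bv k).card ≤ g k := by
    intro Bv hBv k
    refine (slalomD0_card_le f n M Bv k).trans ?_
    rw [hsl _ (hBv ⟨M, Nat.lt_succ_self M⟩) k]
  have hslal : ∀ B ∈ Φ '' T, IsSlalom g B := by
    rintro B ⟨Bv, hBv, rfl⟩
    intro k
    exact (padF_spec (hcard0 Bv hBv k)).2
  have hcover : ∀ x : ℕ → ℕ, (∀ k, x k < f k ^ n) → ∃ B ∈ Φ '' T, Covers B x := by
    intro x hx
    have hgood : ∀ j, Bfin f pick x j ∈ 𝓑 ∧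
        ∀ k, encIter (fun i => Bfin f pick x i k) (f k) j (x k) % f k
          ∈ Bfin f pick x j k := by
      intro j
      have hy : ∀ k, (encIter (fun i => Bfin f pick x i k) (f k) j (x k) % f k) < f k :=
        fun k => Nat.mod_lt _ (hf0 k)
      constructor
      · rw [Bfin_unfold]; exact (hpick _ hy).1
      · intro k
        have h2 := (hpick _ hy).2 k
        rw [Bfin_unfold f pick x j]
        exact h2
    set Bv : Fin (M+1) → ℕ → Finset ℕ := fun i => Bfin f pick x i with hBv
    have hBvT : Bv ∈ T := fun i => (hgood i).1
    refine ⟨Φ Bv, ⟨Bv, hBvT, rfl⟩, ?_⟩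
    intro k
    have hchain : ∀ j, ∀ z : ℕ, j ≤ M →
        encIter (fun i' => if h : i' < M+1 then Bv ⟨i', h⟩ k else ∅) (f k) j z
          = encIter (fun i => Bfin f pick x i k) (f k) j z := by
      intro j z hj
      apply encIter_congr
      intro i hi
      have hi' : i < M + 1 := by omega
      rw [dif_pos hi']
    apply (padF_spec (hcard0 Bv hBvT k)).1
    simp only [slalomD0, Finset.mem_filter, Finset.mem_range]
    refine ⟨hx k, ?_, ?_⟩
    · intro i hi
      have hi' : i < M + 1 := by omega
      rw [hchain i (x k) (le_of_lt hi), dif_pos hi']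
      exact (hgood i).2 k
    · rw [hchain M (x k) le_rfl]
      have hlt : encIter (fun i => Bfin f pick x i k) (f k) M (x k) < f k := by
        have hb := encIter_lt (Bs := fun i => Bfin f pick x i k) (G := g k) (j := M) (hf0 k)
          (fun i _ => hsl _ (hgood i).1 k) (fun i _ => (hgood i).2 k) (hx k)
        exact lt_of_lt_of_le hb (hM (f k) (g k) (hg k) (hgf k) (hpow k))
      have hmem := (hgood M).2 k
      rwa [Nat.mod_eq_of_lt hlt] at hmem
  have h1 : slalomCov (fun k => f k ^ n) g ≤ Cardinal.mk (Φ '' T) :=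
    csInf_le' ⟨Φ '' T, hslal, hcover, rfl⟩
  have h2 : Cardinal.mk (Φ '' T) ≤ Cardinal.mk 𝓑 := by
    refine le_trans (Cardinal.mk_image_le) ?_
    have hsurj : Function.Surjective
        (fun v : Fin (M+1) → ↥𝓑 => (⟨fun i => (v i : ℕ → Finset ℕ),
          fun i => (v i).2⟩ : ↥T)) := by
      rintro ⟨Bv, hBv⟩
      exact ⟨fun i => ⟨Bv i, hBv i⟩, rfl⟩
    refine le_trans (Cardinal.mk_le_of_surjective hsurj) ?_
    have e1 : Cardinal.mk (Fin (M+1) → ↥𝓑)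
        = Cardinal.mk ↥𝓑 ^ ((M+1 : ℕ) : Cardinal) := by
      rw [← Cardinal.power_def, Cardinal.mk_fin]
    rw [e1, Cardinal.power_natCast, Cardinal.power_nat_eq hκinf (by omega)]
  have hceq' : slalomCov f g = Cardinal.mk 𝓑 := hceq
  rw [hceq']
  exact h1.trans h2
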